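/- Let R be a ring, M a simple left R-module whose R-endomorphism ring is ℂ (acting by scalars). Then for any finite list of vectors m_1,…,m_k ∈ M with m_1,…,m_k linearly independent over ℂ, and any targets v_1,…,v_k ∈ M, there exists r ∈ R with r·m_i = v_i for all i. -/

import Mathlib

section Aux

variable (R : Type*) [Ring R]
    (M : Type*) [AddCommGroup M] [Module ℂ M] [Module R M] [SMulCommClass ℂ R M]

omit [SMulCommClass ℂ R M] in
theorem jacobson_density_aux
    (hM : IsSimpleModule R M)
    (hEnd : ∀ f : M →ₗ[R] M, ∃ c : ℂ, ∀ m : M, f m = c • m) :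
    ∀ (k : ℕ) (m : Fin k → M), LinearIndependent ℂ m →
      Function.Surjective (LinearMap.pi (fun i => LinearMap.toSpanSingleton R M (m i)) :
        R →ₗ[R] (Fin k → M)) := by
  intro k
  induction k with
  | zero => intro m _ w; exact ⟨0, funext fun i => i.elim0⟩
  | succ k IH =>
    intro m hind w
    set φ : R →ₗ[R] (Fin k → M) :=
      LinearMap.pi (fun i => LinearMap.toSpanSingleton R M (m i.castSucc)) with hφ
    have hφsurj : Function.Surjective φ :=
      IH (fun i => m i.castSucc) (hind.comp Fin.castSucc (Fin.castSucc_injective k))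
    set ψ : R →ₗ[R] M := LinearMap.toSpanSingleton R M (m (Fin.last k)) with hψ
    -- the submodule (ker φ) • m (last k)
    set P : Submodule R M := (LinearMap.ker φ).map ψ with hP
    have hPtop : P = ⊤ := by
      rcases hM.1.2 P with hbot | htop
      · exfalso
        -- ker φ ≤ ker ψ, so ψ factors through φ
        have hle : LinearMap.ker φ ≤ LinearMap.ker ψ := by
          intro n hn
          have : ψ n ∈ P := ⟨n, hn, rfl⟩
          rw [hbot] at this
          simpa using this
        set e := φ.quotKerEquivOfSurjective hφsurj with he
        have hemk : ∀ r : R, e (Submodule.Quotient.mk r) = φ r := fun r => rfl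
        set g : (Fin k → M) →ₗ[R] M := ((LinearMap.ker φ).liftQ ψ hle) ∘ₗ (e.symm : (Fin k → M) →ₗ[R] _) with hg
        have hgφ : ∀ r : R, g (φ r) = ψ r := by
          intro r
          have : e.symm (φ r) = Submodule.Quotient.mk r := by
            rw [← hemk r]; exact e.symm_apply_apply _
          simp only [hg, LinearMap.comp_apply, LinearEquiv.coe_coe, this]
          rfl
        -- component maps are scalars
        have hc : ∀ i : Fin k, ∃ c : ℂ, ∀ x : M, g (Pi.single i x) = c • x := fun i =>
          hEnd (g ∘ₗ LinearMap.single R (fun _ : Fin k => M) i)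
        choose c hcspec using hc
        -- m (last k) = ∑ c i • m i.castSucc
        have hlast : m (Fin.last k) = ∑ i : Fin k, c i • m i.castSucc := by
          have h1 : φ 1 = fun i => m i.castSucc := by
            funext i; simp [hφ, LinearMap.toSpanSingleton]
          have h2 : (fun i => m i.castSucc) = ∑ i : Fin k, Pi.single i (m i.castSucc) := by
            simp [Finset.univ_sum_single]
          have := hgφ 1
          rw [h1, h2, map_sum] at this
          simp only [hcspec] at this
          rw [hψ] at this
          simpa [LinearMap.toSpanSingleton] using this.symm
        -- contradicts linear independence
        have hdep : ¬ LinearIndependent ℂ m := by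
          rw [Fintype.linearIndependent_iff]
          push_neg
          refine ⟨Fin.lastCases (-1 : ℂ) c, ?_, Fin.last k, by simp⟩
          rw [Fin.sum_univ_castSucc]
          simp [hlast]
        exact hdep hind
      · exact htop
    -- now solve the interpolation
    obtain ⟨r, hr⟩ := hφsurj (fun i => w i.castSucc)
    have : w (Fin.last k) - r • m (Fin.last k) ∈ P := hPtop ▸ Submodule.mem_top
    obtain ⟨n, hn, hnval⟩ := this
    refine ⟨r + n, ?_⟩
    funext i
    refine Fin.lastCases ?_ ?_ i
    · have : ψ n = w (Fin.last k) - r • m (Fin.last k) := hnval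
      simp only [LinearMap.pi_apply, LinearMap.toSpanSingleton_apply, add_smul]
      rw [hψ] at this
      simp only [LinearMap.toSpanSingleton_apply] at this
      rw [this]; abel
    · intro i
      have h1 : φ r i = w i.castSucc := congrFun hr i
      have h2 : φ n = 0 := hn
      have h3 : n • m i.castSucc = 0 := by
        have := congrFun h2 i
        simpa [hφ, LinearMap.toSpanSingleton] using this
      simp only [LinearMap.pi_apply, LinearMap.toSpanSingleton_apply, add_smul, h3, add_zero]
      simpa [hφ, LinearMap.toSpanSingleton] using h1

end Aux

/-- Jacobson density theorem, specialized to the case where the endomorphism ring of the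
simple module is `ℂ`: if `M` is a simple left `R`-module, `M` is a `ℂ`-vector space with
`ℂ`-action commuting with `R`, and every `R`-endomorphism of `M` is a complex scalar,
then for any `ℂ`-linearly independent vectors `m_1,…,m_k ∈ M` and arbitrary targets
`v_1,…,v_k ∈ M` there is `r ∈ R` with `r • m_i = v_i` for all `i`. -/
theorem jacobson_density_complex
    (R : Type*) [Ring R]
    (M : Type*) [AddCommGroup M] [Module ℂ M] [Module R M] [SMulCommClass ℂ R M]
    (hM : IsSimpleModule R M)
    (hEnd : ∀ f : M →ₗ[R] M, ∃ c : ℂ, ∀ m : M, f m = c • m)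
    (k : ℕ) (m v : Fin k → M) (hind : LinearIndependent ℂ m) :
    ∃ r : R, ∀ i : Fin k, r • m i = v i := by
  obtain ⟨r, hr⟩ := jacobson_density_aux R M hM hEnd k m hind v
  exact ⟨r, fun i => by simpa [LinearMap.toSpanSingleton] using congrFun hr i⟩
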